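/- Assume k has characteristic l. If f ∈ C_c^∞(X, k) satisfies N(f) = 0 and f vanishes identically on the fixed-point set X^γ, then f lies in the image of (id − γ): there exists g ∈ C_c^∞(X, k) with f = g − γ·g. (Together with surjectivity of restriction, this computes the Tate cohomology group Ĥ¹ of C_c^∞(X, k).) -/

import Mathlib

open Set Function Finset

set_option linter.unusedSectionVars false

section TateAux

variable {X : Type*} [TopologicalSpace X] {l : ℕ} {σ : X → X}

private lemma iter_mul_id (hσl : ∀ x, σ^[l] x = x) (q : ℕ) (x : X) : σ^[l * q] x = x := by
  induction q with
  | zero => simp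
  | succ n ih => rw [Nat.mul_succ, Function.iterate_add_apply, hσl]; exact ih

private lemma iter_mod (hσl : ∀ x, σ^[l] x = x) (a : ℕ) (x : X) : σ^[a] x = σ^[a % l] x := by
  conv_lhs => rw [← Nat.mod_add_div a l]
  rw [Function.iterate_add_apply, iter_mul_id hσl]

/-- Fundamental domain construction by induction on a finite list of "small" clopen sets. -/
private lemma exists_fund (hσc : Continuous σ) (hσl : ∀ x, σ^[l] x = x) (hl0 : 0 < l)
    (L : List (Set X))
    (hL : ∀ V ∈ L, IsClopen V ∧ ∀ y ∈ V, ∀ i, 0 < i → i < l → σ^[i] y ∉ V) :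
    ∃ D : Set X, IsClopen D ∧ (∀ x ∈ D, ∃ V ∈ L, x ∈ V) ∧
      (∀ y ∈ D, ∀ i, 0 < i → i < l → σ^[i] y ∉ D) ∧
      (∀ x, (∃ V ∈ L, x ∈ V) → ∃ i < l, σ^[i] x ∈ D) := by
  induction L with
  | nil => exact ⟨∅, isClopen_empty, by simp, by simp, by simp⟩
  | cons V rest ih =>
    obtain ⟨hV, hVsmall⟩ := hL V List.mem_cons_self
    obtain ⟨D', hD'clopen, hD'sub, hD'small, hD'cov⟩ :=
      ih (fun W hW => hL W (List.mem_cons_of_mem _ hW))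
    set T : Set X := ⋃ i ∈ Finset.range l, σ^[i] ⁻¹' V with hTdef
    have hTmem : ∀ x : X, x ∈ T ↔ ∃ i < l, σ^[i] x ∈ V := by
      intro x; simp [hTdef]
    have hTclopen : IsClopen T :=
      isClopen_biUnion_finset fun i _ => hV.preimage (hσc.iterate i)
    refine ⟨V ∪ (D' \ T), hV.union (hD'clopen.diff hTclopen), ?_, ?_, ?_⟩
    · rintro x (hx | hx)
      · exact ⟨V, List.mem_cons_self, hx⟩
      · obtain ⟨W, hW, hxW⟩ := hD'sub x hx.1
        exact ⟨W, List.mem_cons_of_mem _ hW, hxW⟩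
    · rintro y (hy | hy) i hi hil (h | h)
      · exact hVsmall y hy i hi hil h
      · refine h.2 ((hTmem _).2 ⟨l - i, by omega, ?_⟩)
        rw [← Function.iterate_add_apply, show l - i + i = l by omega, hσl]
        exact hy
      · exact hy.2 ((hTmem _).2 ⟨i, hil, h⟩)
      · exact hD'small y hy.1 i hi hil h.1
    · rintro x ⟨W, hW, hxW⟩
      rcases List.mem_cons.mp hW with rfl | hW
      · exact ⟨0, hl0, Or.inl hxW⟩
      · obtain ⟨i, hil, hi⟩ := hD'cov x ⟨W, hW, hxW⟩
        by_cases hT : σ^[i] x ∈ T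
        · obtain ⟨j, hjl, hj⟩ := (hTmem _).1 hT
          rw [← Function.iterate_add_apply] at hj
          refine ⟨(j + i) % l, Nat.mod_lt _ hl0, Or.inl ?_⟩
          rwa [← iter_mod hσl]
        · exact ⟨i, hil, Or.inr ⟨hi, hT⟩⟩

/-- Around every point of a clopen, saturated, fixed-point-free set `K` there is a
"small" clopen neighbourhood inside `K`. -/
private lemma exists_small_nbhd [LocallyCompactSpace X] [T2Space X] [TotallyDisconnectedSpace X]
    (hσc : Continuous σ) (hσl : ∀ x, σ^[l] x = x) (hl0 : 0 < l)
    {K : Set X} (hK : IsClopen K)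
    (hfree : ∀ y ∈ K, ∀ i, 0 < i → i < l → σ^[i] y ≠ y)
    (hsat : ∀ y ∈ K, σ y ∈ K)
    {x : X} (hx : x ∈ K) :
    ∃ V : Set X, IsClopen V ∧ x ∈ V ∧ V ⊆ K ∧
      ∀ y ∈ V, ∀ i, 0 < i → i < l → σ^[i] y ∉ V := by
  classical
  have hiterK : ∀ n, σ^[n] x ∈ K := by
    intro n
    induction n with
    | zero => exact hx
    | succ n ih => rw [Function.iterate_succ_apply']; exact hsat _ ih
  -- the points σ^[i] x, i < l, are pairwise distinct
  have hdist : ∀ i j, i < l → j < l → i ≠ j → σ^[i] x ≠ σ^[j] x := by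
    have key : ∀ i j, i < j → j < l → σ^[i] x ≠ σ^[j] x := by
      intro i j hij hjl h
      have : σ^[j - i] (σ^[i] x) = σ^[i] x := by
        rw [← Function.iterate_add_apply, show j - i + i = j by omega, ← h]
      exact hfree _ (hiterK i) (j - i) (by omega) (by omega) this
    intro i j hil hjl hne
    rcases lt_or_gt_of_ne hne with h | h
    · exact key i j h hjl
    · exact fun hh => key j i h hil hh.symm
  -- clopen separation of pairs of points
  have hsep : ∀ i j : ℕ, ∃ C : Set X,
      i < l → j < l → i ≠ j → IsClopen C ∧ σ^[i] x ∈ C ∧ σ^[j] x ∉ C := by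
    intro i j
    by_cases h : i < l ∧ j < l ∧ i ≠ j
    · obtain ⟨hil, hjl, hij⟩ := h
      have hne := hdist i j hil hjl hij
      have hopen : IsOpen ({σ^[j] x}ᶜ : Set X) := isClosed_singleton.isOpen_compl
      obtain ⟨C, hC, hmem, hsub⟩ :=
        loc_compact_Haus_tot_disc_of_zero_dim.exists_subset_of_mem_open
          (by simpa using hne) hopen
      exact ⟨C, fun _ _ _ => ⟨hC, hmem, fun hc => (hsub hc) rfl⟩⟩
    · exact ⟨∅, fun h1 h2 h3 => absurd ⟨h1, h2, h3⟩ h⟩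
  choose C hC using hsep
  set W : ℕ → Set X := fun i => ⋂ j ∈ (Finset.range l).erase i, (C i j \ C j i) with hWdef
  have hWclopen : ∀ i < l, IsClopen (W i) := by
    intro i hil
    refine isClopen_biInter_finset fun j hj => ?_
    rw [Finset.mem_erase, Finset.mem_range] at hj
    exact ((hC i j hil hj.2 (Ne.symm hj.1)).1).diff ((hC j i hj.2 hil hj.1).1)
  have hWmem : ∀ i < l, σ^[i] x ∈ W i := by
    intro i hil
    refine Set.mem_iInter₂.2 fun j hj => ?_
    rw [Finset.mem_erase, Finset.mem_range] at hj
    exact ⟨(hC i j hil hj.2 (Ne.symm hj.1)).2.1, (hC j i hj.2 hil hj.1).2.2⟩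
  refine ⟨K ∩ ⋂ i ∈ Finset.range l, σ^[i] ⁻¹' (W i), ?_, ?_, Set.inter_subset_left, ?_⟩
  · exact hK.inter (isClopen_biInter_finset fun i hi =>
      (hWclopen i (Finset.mem_range.1 hi)).preimage (hσc.iterate i))
  · exact ⟨hx, Set.mem_iInter₂.2 fun i hi => hWmem i (Finset.mem_range.1 hi)⟩
  · intro y hy i hi hil hcontra
    have h1 : σ^[i] y ∈ W i :=
      Set.mem_iInter₂.1 hy.2 i (Finset.mem_range.2 hil)
    have h2 : σ^[i] y ∈ W 0 := by
      have := Set.mem_iInter₂.1 hcontra.2 0 (Finset.mem_range.2 hl0)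
      simpa using this
    have hi0 : (0 : ℕ) ∈ (Finset.range l).erase i :=
      Finset.mem_erase.2 ⟨by omega, Finset.mem_range.2 hl0⟩
    have hiW : σ^[i] y ∈ C i 0 := (Set.mem_iInter₂.1 h1 0 hi0).1
    have h0i : (i : ℕ) ∈ (Finset.range l).erase 0 :=
      Finset.mem_erase.2 ⟨by omega, Finset.mem_range.2 hil⟩
    exact (Set.mem_iInter₂.1 h2 i h0i).2 hiW

private lemma isLocallyConstant_finsetSum {Y : Type*} [AddCommMonoid Y] {ι : Type*}
    (s : Finset ι) (F : ι → X → Y) (h : ∀ i ∈ s, IsLocallyConstant (F i)) :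
    IsLocallyConstant (fun x => ∑ i ∈ s, F i x) := by
  classical
  induction s using Finset.induction with
  | empty => simp only [Finset.sum_empty]; exact IsLocallyConstant.const (0 : Y)
  | @insert a s ha ih =>
    simp only [Finset.sum_insert ha]
    exact (h a (Finset.mem_insert_self _ _)).add
      (ih fun i hi => h i (Finset.mem_insert_of_mem hi))

private lemma isLocallyConstant_ite {Y : Type*} [Zero Y] {U : Set X}
    [∀ x : X, Decidable (x ∈ U)] (hU : IsClopen U)
    {h : X → Y} (hh : IsLocallyConstant h) :
    IsLocallyConstant (fun x => if x ∈ U then h x else 0) := by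
  classical
  rw [IsLocallyConstant.iff_exists_open]
  intro x
  obtain ⟨V, hVopen, hxV, hV⟩ := hh.exists_open x
  by_cases hx : x ∈ U
  · exact ⟨U ∩ V, hU.2.inter hVopen, ⟨hx, hxV⟩,
      fun y hy => by simp [hy.1, hx, hV y hy.2]⟩
  · refine ⟨Uᶜ, hU.1.isOpen_compl, hx, fun y hy => ?_⟩
    have hyU : y ∉ U := hy
    simp [hyU, hx]

end TateAux

/-- Let `γ` be a homeomorphism, of order dividing the prime `l`, of a locally compact,
Hausdorff, totally disconnected, second countable space `X`, and let `k` be a field of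
characteristic `l`. If `f ∈ C_c^∞(X, k)` satisfies `N(f) = ∑_{i=0}^{l-1} γ^i · f = 0`
(where `(γ^i · f)(x) = f(γ^{-i} x)`) and `f` vanishes on the fixed-point set `X^γ`,
then `f` is in the image of `id − γ`: `f = g − γ · g` for some `g ∈ C_c^∞(X, k)`,
i.e. `f x = g x - g (γ⁻¹ x)` for all `x`. -/
theorem tate_H1_vanishing_part
    (l : ℕ) (hl : l.Prime)
    (X : Type*) [TopologicalSpace X] [LocallyCompactSpace X] [T2Space X]
    [TotallyDisconnectedSpace X] [SecondCountableTopology X]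
    (γ : X ≃ₜ X) (hγl : ∀ x, (⇑γ)^[l] x = x)
    (k : Type*) [Field k] [CharP k l]
    (f : X → k) (hflc : IsLocallyConstant f) (hfcs : HasCompactSupport f)
    (hN : ∀ x, ∑ i ∈ Finset.range l, f ((⇑γ.symm)^[i] x) = 0)
    (hvan : ∀ x, γ x = x → f x = 0) :
    ∃ g : X → k, IsLocallyConstant g ∧ HasCompactSupport g ∧
      ∀ x, f x = g x - g (γ.symm x) := by
  classical
  set σ : X → X := ⇑γ.symm with hσdef
  have hσc : Continuous σ := γ.symm.continuous
  have hl0 : 0 < l := hl.pos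
  have hli : Function.LeftInverse σ ⇑γ := γ.symm_apply_apply
  have hσl : ∀ x, σ^[l] x = x := by
    intro x
    conv_lhs => rw [← hγl x]
    exact (hli.iterate l) x
  -- S : the (clopen, compact) support of f
  set S : Set X := {x | f x ≠ 0} with hSdef
  have hSeq : S = (f ⁻¹' {0})ᶜ := by ext x; simp [hSdef]
  have hSclopen : IsClopen S := by
    rw [hSeq]
    refine ⟨(hflc {0}).isClosed_compl, ?_⟩
    rw [← Set.preimage_compl]
    exact hflc {0}ᶜ
  have hScompact : IsCompact S := by
    refine hfcs.of_isClosed_subset hSclopen.1 ?_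
    exact subset_closure
  -- K : saturation of S
  set K : Set X := ⋃ i ∈ Finset.range l, σ^[i] ⁻¹' S with hKdef
  have hKmem : ∀ x : X, x ∈ K ↔ ∃ i < l, σ^[i] x ∈ S := by intro x; simp [hKdef]
  have hKclopen : IsClopen K :=
    isClopen_biUnion_finset fun i _ => hSclopen.preimage (hσc.iterate i)
  have hri : Function.LeftInverse (⇑γ) σ := γ.apply_symm_apply
  have himg : ∀ i : ℕ, σ^[i] ⁻¹' S = (⇑γ)^[i] '' S := by
    intro i
    ext x
    constructor
    · intro hx
      exact ⟨σ^[i] x, hx, (Function.LeftInverse.iterate hri i) x⟩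
    · rintro ⟨s, hs, rfl⟩
      have := (Function.LeftInverse.iterate hli i) s
      simpa [Set.mem_preimage, this] using hs
  have hKcompact : IsCompact K := by
    rw [hKdef]
    refine (Finset.range l).isCompact_biUnion fun i _ => ?_
    rw [himg i]
    exact hScompact.image (γ.continuous.iterate i)
  obtain ⟨p, hp⟩ : ∃ p, l = p + 1 := ⟨l - 1, by omega⟩
  have hKsat : ∀ y ∈ K, σ y ∈ K := by
    intro y hy
    obtain ⟨i, hil, hi⟩ := (hKmem y).1 hy
    rcases Nat.eq_zero_or_pos i with rfl | hipos
    · refine (hKmem _).2 ⟨p, by omega, ?_⟩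
      rw [← Function.iterate_succ_apply]
      have : σ^[p.succ] y = y := by
        have := hσl y
        rwa [hp] at this
      rw [this]
      simpa using hi
    · obtain ⟨j, rfl⟩ : ∃ j, i = j + 1 := ⟨i - 1, by omega⟩
      refine (hKmem _).2 ⟨j, by omega, ?_⟩
      rw [← Function.iterate_succ_apply]
      exact hi
  have hKiter : ∀ n, ∀ y ∈ K, σ^[n] y ∈ K := by
    intro n
    induction n with
    | zero => exact fun y hy => hy
    | succ n ih =>
      intro y hy
      rw [Function.iterate_succ_apply']
      exact hKsat _ (ih y hy)
  -- freeness on K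
  have hfree : ∀ y ∈ K, ∀ i, 0 < i → i < l → σ^[i] y ≠ y := by
    intro y hy i hi hil hcon
    have hp1 : Function.IsPeriodicPt σ i y := hcon
    have hp2 : Function.IsPeriodicPt σ l y := hσl y
    have hgcd : Nat.gcd i l = 1 := by
      have hnd : ¬ l ∣ i := fun hdvd => absurd (Nat.le_of_dvd hi hdvd) (by omega)
      have : Nat.Coprime l i := (Nat.Prime.coprime_iff_not_dvd hl).2 hnd
      exact Nat.coprime_comm.1 this
    have hp : Function.IsPeriodicPt σ 1 y := by
      have := hp1.gcd hp2
      rwa [hgcd] at this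
    have hσy : σ y = y := hp
    have hγy : γ y = y := by
      conv_lhs => rw [← hσy]
      exact γ.apply_symm_apply y
    have hfy : f y = 0 := hvan y hγy
    obtain ⟨j, hjl, hj⟩ := (hKmem y).1 hy
    have : σ^[j] y = y := by
      clear hj hjl
      induction j with
      | zero => rfl
      | succ n ih => rw [Function.iterate_succ_apply, hσy, ih]
    rw [this] at hj
    exact hj hfy
  -- small clopen neighbourhoods and finite subcover
  have hnbhd : ∀ x : K, ∃ V : Set X, IsClopen V ∧ (x : X) ∈ V ∧ V ⊆ K ∧
      ∀ y ∈ V, ∀ i, 0 < i → i < l → σ^[i] y ∉ V :=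
    fun x => exists_small_nbhd hσc hσl hl0 hKclopen hfree hKsat x.2
  choose V hVclopen hVmem hVsub hVsmall using hnbhd
  obtain ⟨t, ht⟩ := hKcompact.elim_finite_subcover V (fun x => (hVclopen x).2)
    (fun x hx => Set.mem_iUnion.2 ⟨⟨x, hx⟩, hVmem ⟨x, hx⟩⟩)
  set L : List (Set X) := t.toList.map V with hLdef
  have hLprop : ∀ W ∈ L, IsClopen W ∧ ∀ y ∈ W, ∀ i, 0 < i → i < l → σ^[i] y ∉ W := by
    intro W hW
    rw [hLdef, List.mem_map] at hW
    obtain ⟨x, _, rfl⟩ := hW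
    exact ⟨hVclopen x, hVsmall x⟩
  have hLsub : ∀ W ∈ L, W ⊆ K := by
    intro W hW
    rw [hLdef, List.mem_map] at hW
    obtain ⟨x, _, rfl⟩ := hW
    exact hVsub x
  have hLcov : ∀ x ∈ K, ∃ W ∈ L, x ∈ W := by
    intro x hx
    obtain ⟨i, hi⟩ := Set.mem_iUnion.1 (ht hx)
    obtain ⟨hit, hxi⟩ := Set.mem_iUnion.1 hi
    exact ⟨V i, by rw [hLdef, List.mem_map]; exact ⟨i, Finset.mem_toList.2 hit, rfl⟩, hxi⟩
  obtain ⟨D, hDclopen, hDsub, hDsmall, hDcov⟩ := exists_fund hσc hσl hl0 L hLprop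
  have hDK : D ⊆ K := fun x hx => by
    obtain ⟨W, hW, hxW⟩ := hDsub x hx
    exact hLsub W hW hxW
  have hKcov : ∀ x ∈ K, ∃ i < l, σ^[i] x ∈ D := fun x hx => hDcov x (hLcov x hx)
  -- uniqueness of the return index
  have huniq : ∀ x : X, ∀ i j, i < l → j < l → σ^[i] x ∈ D → σ^[j] x ∈ D → i = j := by
    have key : ∀ x : X, ∀ i j, i < j → j < l → σ^[i] x ∈ D → σ^[j] x ∈ D → False := by
      intro x i j hij hjl hi hj
      refine hDsmall _ hi (j - i) (by omega) (by omega) ?_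
      rwa [← Function.iterate_add_apply, show j - i + i = j by omega]
    intro x i j hil hjl hi hj
    rcases lt_trichotomy i j with h | h | h
    · exact (key x i j h hjl hi hj).elim
    · exact h
    · exact (key x j i h hil hj hi).elim
  -- the primitive g
  set g : X → k := fun x => ∑ i ∈ Finset.range l,
    if σ^[i] x ∈ D then (∑ m ∈ Finset.range (i + 1), f (σ^[m] x)) else 0 with hgdef
  have hg_eval : ∀ x : X, ∀ i, i < l → σ^[i] x ∈ D →
      g x = ∑ m ∈ Finset.range (i + 1), f (σ^[m] x) := by
    intro x i hil hiD
    show (∑ j ∈ Finset.range l,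
      if σ^[j] x ∈ D then (∑ m ∈ Finset.range (j + 1), f (σ^[m] x)) else 0)
      = ∑ m ∈ Finset.range (i + 1), f (σ^[m] x)
    rw [Finset.sum_eq_single_of_mem i (Finset.mem_range.2 hil)]
    · rw [if_pos hiD]
    · intro j hj hne
      rw [if_neg]
      intro hjD
      exact hne (huniq x j i (Finset.mem_range.1 hj) hil hjD hiD)
  have hg_zero : ∀ x : X, (∀ i, i < l → σ^[i] x ∉ D) → g x = 0 := by
    intro x hx
    show (∑ i ∈ Finset.range l,
      if σ^[i] x ∈ D then (∑ m ∈ Finset.range (i + 1), f (σ^[m] x)) else 0) = 0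
    refine Finset.sum_eq_zero fun i hi => ?_
    rw [if_neg (hx i (Finset.mem_range.1 hi))]
  refine ⟨g, ?_, ?_, ?_⟩
  · -- locally constant
    refine isLocallyConstant_finsetSum _ _ fun i _ => ?_
    have hclopen : IsClopen (σ^[i] ⁻¹' D) := hDclopen.preimage (hσc.iterate i)
    have hsum : IsLocallyConstant fun x => ∑ m ∈ Finset.range (i + 1), f (σ^[m] x) :=
      isLocallyConstant_finsetSum _ _ fun m _ => hflc.comp_continuous (hσc.iterate m)
    exact isLocallyConstant_ite hclopen hsum
  · -- compact support
    refine HasCompactSupport.intro hKcompact fun x hx => ?_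
    refine hg_zero x fun i hil hiD => ?_
    have : σ^[i] x ∈ K := hDK hiD
    have hxitK : σ^[l] x ∈ K := by
      rw [show l = (l - i) + i by omega, Function.iterate_add_apply]
      exact hKiter (l - i) _ this
    rw [hσl x] at hxitK
    exact hx hxitK
  · -- the telescoping identity
    intro x
    by_cases hx : ∃ i < l, σ^[i] x ∈ D
    · obtain ⟨i, hil, hiD⟩ := hx
      have hgx : g x = ∑ m ∈ Finset.range (i + 1), f (σ^[m] x) := hg_eval x i hil hiD
      rcases Nat.eq_zero_or_pos i with rfl | hipos
      · -- x ∈ D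
        have hxD : x ∈ D := hiD
        have hgx' : g x = f x := by rw [hgx]; simp
        have hl1 : σ^[p] (σ x) ∈ D := by
          rw [← Function.iterate_succ_apply]
          have hpl : σ^[p.succ] x = x := by
            have := hσl x; rwa [hp] at this
          rw [hpl]
          exact hxD
        have hgσ : g (σ x) = ∑ m ∈ Finset.range l, f (σ^[m] (σ x)) := by
          have := hg_eval (σ x) p (by omega) hl1
          rwa [show p + 1 = l by omega] at this
        have hshift : ∀ m : ℕ, f (σ^[m] (σ x)) = f (σ^[m + 1] x) := by
          intro m; rw [← Function.iterate_succ_apply]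
        have hzero : g (σ x) = 0 := by
          rw [hgσ]
          have h1 : ∑ m ∈ Finset.range (l + 1), f (σ^[m] x)
              = (∑ m ∈ Finset.range l, f (σ^[m + 1] x)) + f (σ^[0] x) :=
            Finset.sum_range_succ' _ l
          have h2 : ∑ m ∈ Finset.range (l + 1), f (σ^[m] x)
              = (∑ m ∈ Finset.range l, f (σ^[m] x)) + f (σ^[l] x) :=
            Finset.sum_range_succ _ l
          have h3 : ∑ m ∈ Finset.range l, f (σ^[m] x) = 0 := hN x
          have h4 : f (σ^[l] x) = f x := by rw [hσl]
          have h5 : f (σ^[0] x) = f x := rfl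
          calc ∑ m ∈ Finset.range l, f (σ^[m] (σ x))
              = ∑ m ∈ Finset.range l, f (σ^[m + 1] x) := by
                refine Finset.sum_congr rfl fun m _ => hshift m
            _ = 0 := by
                have heq := h1.symm.trans h2
                rw [h3, h4, h5, zero_add] at heq
                exact add_right_cancel (heq.trans (zero_add (f x)).symm)
        rw [hgx', hzero]
        ring
      · -- i > 0
        obtain ⟨j, rfl⟩ : ∃ j, i = j + 1 := ⟨i - 1, by omega⟩
        have hprev : σ^[j] (σ x) ∈ D := by
          rw [← Function.iterate_succ_apply]
          exact hiD
        have hgσ : g (σ x) = ∑ m ∈ Finset.range (j + 1), f (σ^[m] (σ x)) := by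
          exact hg_eval (σ x) j (by omega) hprev
        have hshift : ∀ m : ℕ, f (σ^[m] (σ x)) = f (σ^[m + 1] x) := by
          intro m; rw [← Function.iterate_succ_apply]
        have h1 : ∑ m ∈ Finset.range (j + 1 + 1), f (σ^[m] x)
            = (∑ m ∈ Finset.range (j + 1), f (σ^[m + 1] x)) + f (σ^[0] x) :=
          Finset.sum_range_succ' _ (j + 1)
        rw [hgx, hgσ]
        rw [Finset.sum_congr rfl fun m _ => hshift m]
        rw [h1]
        simp
    · push_neg at hx
      have hgx : g x = 0 := hg_zero x hx
      have hgσ : g (σ x) = 0 := by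
        refine hg_zero (σ x) fun j hjl hjD => ?_
        rw [← Function.iterate_succ_apply] at hjD
        rcases Nat.lt_or_ge (j + 1) l with h | h
        · exact hx (j + 1) h hjD
        · have hj1 : j.succ = l := by omega
          rw [hj1, hσl] at hjD
          exact hx 0 hl0 hjD
      have hfx : f x = 0 := by
        by_contra hfx
        have hxK : x ∈ K := (hKmem x).2 ⟨0, hl0, hfx⟩
        obtain ⟨i, hil, hiD⟩ := hKcov x hxK
        exact hx i hil hiD
      rw [hgx, hgσ, hfx]
      ring
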